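/- For every x > 1 the derivative of the backward auxiliary function satisfies φ←'(x) > κ, and for every x with 0 < x < 1 the derivative of the forward auxiliary function satisfies φ→'(x) > κ. -/

import Mathlib

open Real Set Filter Topology

/-- κ = √γ / α with α = (γ-1)/2. -/
noncomputable def kappa (γ : ℝ) : ℝ := Real.sqrt γ / ((γ - 1) / 2)

/-- The shock branch x ↦ √((1 - x^{-1/α})(x^{γ/α} - 1)), α = (γ-1)/2. -/
noncomputable def shockPart (γ : ℝ) (x : ℝ) : ℝ :=
  Real.sqrt ((1 - x ^ (-(1 : ℝ) / ((γ - 1) / 2))) * (x ^ (γ / ((γ - 1) / 2)) - 1))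

/-- Backward auxiliary function φ← : rarefaction branch κ(x-1) for x ≤ 1,
    shock branch for x ≥ 1 (they agree, with value 0, at x = 1). -/
noncomputable def phiB (γ : ℝ) (x : ℝ) : ℝ :=
  if x ≤ 1 then kappa γ * (x - 1) else shockPart γ x

/-- Forward auxiliary function φ→ : shock branch -√(...) for x ≤ 1,
    rarefaction branch κ(x-1) for x ≥ 1 (they agree, with value 0, at x = 1). -/
noncomputable def phiF (γ : ℝ) (x : ℝ) : ℝ :=
  if x < 1 then -shockPart γ x else kappa γ * (x - 1)

/-! ### Auxiliary development -/

noncomputable def auxG (p y : ℝ) : ℝ := (1 - y ^ (-p)) * (y ^ (p+2) - 1)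

noncomputable def auxH (p y : ℝ) : ℝ := (2*p+2)*y - p * y^(-p-1) - (p+2)*y^(p+1)

noncomputable def auxH' (p y : ℝ) : ℝ := (2*p+2) + p*(p+1)*y^(-p-2) - (p+2)*(p+1)*y^p

lemma hasDerivAt_auxG (p x : ℝ) (hx : 0 < x) :
    HasDerivAt (auxG p)
      (p * x ^ (-p-1) * (x ^ (p+2) - 1) + (p+2) * x ^ (p+1) * (1 - x ^ (-p))) x := by
  have h1 : HasDerivAt (fun y : ℝ => 1 - y ^ (-p)) (p * x ^ (-p-1)) x := by
    have h := (Real.hasDerivAt_rpow_const (p := -p) (Or.inl hx.ne')).const_sub 1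
    convert h using 1
    all_goals try rfl
    ring
  have h2 : HasDerivAt (fun y : ℝ => y ^ (p+2) - 1) ((p+2) * x ^ (p+1)) x := by
    have h := (Real.hasDerivAt_rpow_const (p := p+2) (Or.inl hx.ne')).sub_const 1
    rw [show p + 2 - 1 = p + 1 by ring] at h
    exact h
  have h := h1.mul h2
  convert h using 1
  all_goals try rfl
  ring

lemma hasDerivAt_auxH (p x : ℝ) (hx : 0 < x) : HasDerivAt (auxH p) (auxH' p x) x := by
  have h1 : HasDerivAt (fun y : ℝ => (2*p+2)*y) ((2*p+2) * 1) x :=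
    (hasDerivAt_id x).const_mul (2*p+2)
  have h2 : HasDerivAt (fun y : ℝ => p * y ^ (-p-1)) (p * ((-p-1) * x ^ (-p-1-1))) x :=
    (Real.hasDerivAt_rpow_const (p := -p-1) (Or.inl hx.ne')).const_mul p
  have h3 : HasDerivAt (fun y : ℝ => (p+2) * y ^ (p+1)) ((p+2) * ((p+1) * x ^ (p+1-1))) x :=
    (Real.hasDerivAt_rpow_const (p := p+1) (Or.inl hx.ne')).const_mul (p+2)
  have h := (h1.sub h2).sub h3
  rw [show -p-1-1 = -p-2 by ring, show p+1-1 = p by ring] at h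
  convert h using 1
  all_goals try rfl
  unfold auxH'
  ring

lemma hasDerivAt_auxH' (p x : ℝ) (hx : 0 < x) :
    HasDerivAt (auxH' p)
      (p*(p+1)*((-p-2) * x ^ (-p-3)) - (p+2)*(p+1)*(p * x ^ (p-1))) x := by
  have h2 : HasDerivAt (fun y : ℝ => p*(p+1) * y ^ (-p-2)) (p*(p+1) * ((-p-2) * x ^ (-p-2-1))) x :=
    (Real.hasDerivAt_rpow_const (p := -p-2) (Or.inl hx.ne')).const_mul (p*(p+1))
  have h3 : HasDerivAt (fun y : ℝ => (p+2)*(p+1) * y ^ p) ((p+2)*(p+1) * (p * x ^ (p-1))) x :=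
    (Real.hasDerivAt_rpow_const (p := p) (Or.inl hx.ne')).const_mul ((p+2)*(p+1))
  have h := (h2.const_add (2*p+2)).sub h3
  rw [show -p-2-1 = -p-3 by ring] at h
  exact h

lemma strictAntiOn_auxH' (p : ℝ) (hp : 0 < p) : StrictAntiOn (auxH' p) (Ioi 0) := by
  apply strictAntiOn_of_deriv_neg (convex_Ioi 0)
  · exact fun x hx => ((hasDerivAt_auxH' p x hx).continuousAt).continuousWithinAt
  · intro x hx
    rw [interior_Ioi] at hx
    rw [(hasDerivAt_auxH' p x hx).deriv]
    have A : 0 < x ^ (-p-3) := Real.rpow_pos_of_pos hx _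
    have B : 0 < x ^ (p-1) := Real.rpow_pos_of_pos hx _
    have t1 : p*(p+1)*((-p-2) * x ^ (-p-3)) < 0 := by
      apply mul_neg_of_pos_of_neg (by nlinarith)
      exact mul_neg_of_neg_of_pos (by linarith) A
    have t2 : 0 < (p+2)*(p+1)*(p * x ^ (p-1)) := by
      apply mul_pos (by nlinarith)
      exact mul_pos hp B
    linarith

lemma auxH'_one (p : ℝ) : auxH' p 1 = 0 := by
  unfold auxH'
  rw [Real.one_rpow, Real.one_rpow]
  ring

lemma auxH_one (p : ℝ) : auxH p 1 = 0 := by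
  unfold auxH
  rw [Real.one_rpow, Real.one_rpow]
  ring

lemma auxH_neg (p x : ℝ) (hp : 0 < p) (hx : 0 < x) (hx1 : x ≠ 1) : auxH p x < 0 := by
  rcases lt_or_gt_of_ne hx1 with h | h
  · -- x < 1 : auxH' > 0 on (0,1), so auxH strictly increasing on (0,1]
    have hmono : StrictMonoOn (auxH p) (Ioc 0 1) := by
      apply strictMonoOn_of_deriv_pos (convex_Ioc 0 1)
      · exact fun y hy => ((hasDerivAt_auxH p y hy.1).continuousAt).continuousWithinAt
      · intro y hy
        rw [interior_Ioc] at hy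
        rw [(hasDerivAt_auxH p y hy.1).deriv]
        have := strictAntiOn_auxH' p hp hy.1 (mem_Ioi.2 one_pos) hy.2
        rw [auxH'_one] at this
        linarith
    have := hmono (mem_Ioc.2 ⟨hx, h.le⟩) (mem_Ioc.2 ⟨one_pos, le_refl 1⟩) h
    rw [auxH_one] at this
    exact this
  · -- x > 1 : auxH' < 0 on (1,∞), so auxH strictly decreasing on [1,∞)
    have hmono : StrictAntiOn (auxH p) (Ici 1) := by
      apply strictAntiOn_of_deriv_neg (convex_Ici 1)
      · exact fun y hy => ((hasDerivAt_auxH p y (by linarith [mem_Ici.1 hy])).continuousAt).continuousWithinAt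
      · intro y hy
        rw [interior_Ici] at hy
        have hy1 : (1:ℝ) < y := hy
        rw [(hasDerivAt_auxH p y (by linarith)).deriv]
        have := strictAntiOn_auxH' p hp (mem_Ioi.2 one_pos) (mem_Ioi.2 (by linarith)) hy1
        rw [auxH'_one] at this
        linarith
    have := hmono (mem_Ici.2 le_rfl) (mem_Ici.2 h.le) h
    rw [auxH_one] at this
    exact this

lemma key_amgm (u v s κ : ℝ) (hu : 0 < u) (hv : 0 < v) (huv : u ≠ v)
    (hs : 0 < s) (hκ : 0 < κ) (hprod : u * v = κ ^ 2 * s) :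
    κ < (u + v) / (2 * Real.sqrt s) := by
  have hts : (0:ℝ) < Real.sqrt s := Real.sqrt_pos.2 hs
  set a := Real.sqrt u with ha
  set b := Real.sqrt v with hb
  have ha2 : a ^ 2 = u := Real.sq_sqrt hu.le
  have hb2 : b ^ 2 = v := Real.sq_sqrt hv.le
  have hab : a ≠ b := fun h => huv (by rw [← ha2, ← hb2, h])
  have hprod' : κ * Real.sqrt s = a * b := by
    have h1 : Real.sqrt (u * v) = a * b := by rw [ha, hb, Real.sqrt_mul hu.le]
    have h2 : Real.sqrt (u * v) = κ * Real.sqrt s := by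
      rw [hprod, Real.sqrt_mul (sq_nonneg κ), Real.sqrt_sq hκ.le]
    rw [← h2, h1]
  have hposab : 0 < (a - b)^2 :=
    lt_of_le_of_ne (sq_nonneg _) (Ne.symm (pow_ne_zero 2 (sub_ne_zero.2 hab)))
  rw [lt_div_iff₀ (by positivity)]
  nlinarith [hprod', ha2, hb2, hposab]

theorem deriv_phi_gt_kappa (γ : ℝ) (hγ : 1 < γ) :
    (∀ x : ℝ, 1 < x → kappa γ < deriv (phiB γ) x) ∧
    (∀ x : ℝ, 0 < x → x < 1 → kappa γ < deriv (phiF γ) x) := by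
  have hγ1 : (0:ℝ) < γ - 1 := by linarith
  set p : ℝ := 2 / (γ - 1) with hpdef
  have hp : 0 < p := by positivity
  have hexp1 : -(1 : ℝ) / ((γ - 1) / 2) = -p := by
    rw [hpdef]; field_simp
  have hexp2 : γ / ((γ - 1) / 2) = p + 2 := by
    rw [hpdef]; field_simp; ring
  have hshock : ∀ y : ℝ, shockPart γ y = Real.sqrt (auxG p y) := by
    intro y
    unfold shockPart auxG
    rw [hexp1, hexp2]
  have hκ : 0 < kappa γ := by
    unfold kappa
    exact div_pos (Real.sqrt_pos.2 (by linarith)) (by linarith)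
  have hκ2 : kappa γ ^ 2 = p * (p + 2) := by
    unfold kappa
    rw [div_pow, Real.sq_sqrt (by linarith : (0:ℝ) ≤ γ)]
    rw [hpdef]
    field_simp
    ring
  -- key function facts at a point x > 0, x ≠ 1
  have main : ∀ x : ℝ, 0 < x → x ≠ 1 →
      (0 < auxG p x) ∧
      (p * x ^ (-p-1) * (x ^ (p+2) - 1)) - ((p+2) * x ^ (p+1) * (1 - x ^ (-p))) = auxH p x ∧
      (p * x ^ (-p-1) * (x ^ (p+2) - 1)) * ((p+2) * x ^ (p+1) * (1 - x ^ (-p)))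
        = kappa γ ^ 2 * auxG p x := by
    intro x hx hx1
    have e1 : x ^ (-p-1) * x ^ (p+2) = x := by
      rw [← Real.rpow_add hx, show -p-1+(p+2) = 1 by ring, Real.rpow_one]
    have e2 : x ^ (p+1) * x ^ (-p) = x := by
      rw [← Real.rpow_add hx, show p+1+(-p) = 1 by ring, Real.rpow_one]
    have e3 : x ^ (-p-1) * x ^ (p+1) = 1 := by
      rw [← Real.rpow_add hx, show -p-1+(p+1) = 0 by ring, Real.rpow_zero]
    refine ⟨?_, ?_, ?_⟩
    · rcases lt_or_gt_of_ne hx1 with h | h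
      · have hD : 1 < x ^ (-p) := by
          rw [Real.one_lt_rpow_iff_of_pos hx]
          exact Or.inr ⟨h, by linarith⟩
        have hB : x ^ (p+2) < 1 := Real.rpow_lt_one hx.le h (by linarith)
        unfold auxG
        exact mul_pos_of_neg_of_neg (by linarith) (by linarith)
      · have hD : x ^ (-p) < 1 := Real.rpow_lt_one_of_one_lt_of_neg h (by linarith)
        have hB : 1 < x ^ (p+2) := by
          rw [Real.one_lt_rpow_iff_of_pos hx]
          exact Or.inl ⟨h, by linarith⟩
        unfold auxG
        exact mul_pos (by linarith) (by linarith)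
    · unfold auxH
      linear_combination p * e1 + (p+2) * e2
    · unfold auxG
      rw [hκ2]
      linear_combination (p * (p+2) * (x ^ (p+2) - 1) * (1 - x ^ (-p))) * e3
  constructor
  · intro x hx1
    have hx : (0:ℝ) < x := by linarith
    obtain ⟨hg, hdiff, hprod⟩ := main x hx (by linarith)
    set u := p * x ^ (-p-1) * (x ^ (p+2) - 1) with hu_def
    set v := (p+2) * x ^ (p+1) * (1 - x ^ (-p)) with hv_def
    have hD : x ^ (-p) < 1 := Real.rpow_lt_one_of_one_lt_of_neg hx1 (by linarith)
    have hB : 1 < x ^ (p+2) := by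
      rw [Real.one_lt_rpow_iff_of_pos hx]
      exact Or.inl ⟨hx1, by linarith⟩
    have hAu : 0 < x ^ (-p-1) := Real.rpow_pos_of_pos hx _
    have hAv : 0 < x ^ (p+1) := Real.rpow_pos_of_pos hx _
    have hu : 0 < u := mul_pos (mul_pos hp hAu) (by linarith)
    have hv : 0 < v := mul_pos (mul_pos (by linarith) hAv) (by linarith)
    have hne : u ≠ v := by
      have := auxH_neg p x hp hx (by linarith)
      intro h
      rw [h] at hdiff
      simp at hdiff
      linarith [hdiff ▸ this]
    have hD1 : deriv (phiB γ) x = (u + v) / (2 * Real.sqrt (auxG p x)) := by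
      have hEq : phiB γ =ᶠ[𝓝 x] fun y => Real.sqrt (auxG p y) := by
        filter_upwards [isOpen_Ioi.mem_nhds hx1] with y hy
        unfold phiB
        rw [if_neg (not_le.2 hy), hshock y]
      rw [hEq.deriv_eq]
      exact ((hasDerivAt_auxG p x hx).sqrt hg.ne').deriv
    rw [hD1]
    exact key_amgm u v (auxG p x) (kappa γ) hu hv hne hg hκ hprod
  · intro x hx hx1
    obtain ⟨hg, hdiff, hprod⟩ := main x hx (by linarith)
    set u := p * x ^ (-p-1) * (x ^ (p+2) - 1) with hu_def
    set v := (p+2) * x ^ (p+1) * (1 - x ^ (-p)) with hv_def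
    have hD : 1 < x ^ (-p) := by
      rw [Real.one_lt_rpow_iff_of_pos hx]
      exact Or.inr ⟨hx1, by linarith⟩
    have hB : x ^ (p+2) < 1 := Real.rpow_lt_one hx.le hx1 (by linarith)
    have hAu : 0 < x ^ (-p-1) := Real.rpow_pos_of_pos hx _
    have hAv : 0 < x ^ (p+1) := Real.rpow_pos_of_pos hx _
    have hu : u < 0 := mul_neg_of_pos_of_neg (mul_pos hp hAu) (by linarith)
    have hv : v < 0 := mul_neg_of_pos_of_neg (mul_pos (by linarith) hAv) (by linarith)
    have hne : -u ≠ -v := by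
      have := auxH_neg p x hp hx (by linarith)
      intro h
      have h' : u = v := by linarith [neg_injective h]
      rw [h'] at hdiff
      simp at hdiff
      linarith [hdiff ▸ this]
    have hD1 : deriv (phiF γ) x = (-u + -v) / (2 * Real.sqrt (auxG p x)) := by
      have hEq : phiF γ =ᶠ[𝓝 x] fun y => -Real.sqrt (auxG p y) := by
        filter_upwards [isOpen_Iio.mem_nhds hx1] with y hy
        unfold phiF
        rw [if_pos (mem_Iio.1 hy), hshock y]
      rw [hEq.deriv_eq]
      have := (((hasDerivAt_auxG p x hx).sqrt hg.ne').fun_neg).deriv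
      rw [this]
      ring
    rw [hD1]
    have hprod' : (-u) * (-v) = kappa γ ^ 2 * auxG p x := by
      rw [neg_mul_neg]; exact hprod
    exact key_amgm (-u) (-v) (auxG p x) (kappa γ) (by linarith) (by linarith) hne hg hκ hprod'
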